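/- Let ξ : [y₀, ∞) → ℝ be twice continuously differentiable with ξ(y₀) = 0, ξ(y) > 0 and ξ'(y) > 0 for y > y₀. Suppose there exists y₂ ≥ y₀ such that ξ'' ≤ 0 on [y₀, y₂] and ξ'' > 0 on (y₂, ∞), and suppose (y − y₀ − K)/ξ(y) → −∞ as y → y₀⁺ and → 0 as y → ∞, and is positive at some point. Then for every K ≥ 0 the function k_K(y) = (y − y₀ − K)/ξ(y) on (y₀, ∞) has a unique maximizer ŷ_K, this maximizer lies in [max{y₀ + K, y₂}, ∞), and k_K is strictly decreasing on (ŷ_K, ∞). -/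

import Mathlib

open Set Filter

theorem stmt0 (y₀ y₂ K : ℝ) (hy₀ : 0 < y₀) (hK : 0 ≤ K) (hy₂ : y₀ ≤ y₂)
    (ξ ξ' ξ'' : ℝ → ℝ)
    (hd1 : ∀ y ∈ Ici y₀, HasDerivAt ξ (ξ' y) y)
    (hd2 : ∀ y ∈ Ici y₀, HasDerivAt ξ' (ξ'' y) y)
    (hc2 : ContinuousOn ξ'' (Ici y₀))
    (hξ0 : ξ y₀ = 0)
    (hξpos : ∀ y > y₀, 0 < ξ y)
    (hξ'pos : ∀ y > y₀, 0 < ξ' y)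
    (hconc : ∀ y ∈ Icc y₀ y₂, ξ'' y ≤ 0)
    (hconv : ∀ y > y₂, 0 < ξ'' y)
    (k : ℝ → ℝ) (hk : ∀ y, k y = (y - y₀ - K) / ξ y)
    (hlim0 : Tendsto k (nhdsWithin y₀ (Ioi y₀)) atBot)
    (hliminfty : Tendsto k atTop (nhds 0))
    (hsomepos : ∃ y > y₀, 0 < k y) :
    ∃! yhat, yhat ∈ Ioi y₀ ∧ IsMaxOn k (Ioi y₀) yhat ∧
      max (y₀ + K) y₂ ≤ yhat ∧ StrictAntiOn k (Ioi yhat) := by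
  have hkext : k = fun y => (y - y₀ - K) / ξ y := funext hk
  subst hkext
  set k : ℝ → ℝ := fun y => (y - y₀ - K) / ξ y with hkdef
  have hξne : ∀ y ∈ Ioi y₀, ξ y ≠ 0 := fun y hy => (hξpos y hy).ne'
  set G : ℝ → ℝ := fun y => ξ y - (y - y₀ - K) * ξ' y with hGdef
  have hδ : ∀ y : ℝ, HasDerivAt (fun y => y - y₀ - K) 1 y := by
    intro y
    simpa using ((hasDerivAt_id y).sub_const y₀).sub_const K
  have hdk : ∀ y ∈ Ioi y₀, HasDerivAt k (G y / (ξ y) ^ 2) y := by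
    intro y hy
    have := (hδ y).div (hd1 y (Set.mem_Ici.mpr (le_of_lt hy))) (hξne y hy)
    exact this.congr_deriv (by simp only [hGdef, one_mul])
  have hdG : ∀ y ∈ Ici y₀, HasDerivAt G (-((y - y₀ - K) * ξ'' y)) y := by
    intro y hy
    have := (hd1 y hy).sub ((hδ y).mul (hd2 y hy))
    exact this.congr_deriv (by ring)
  have hcont : ContinuousOn k (Ioi y₀) :=
    fun y hy => ((hdk y hy).continuousAt).continuousWithinAt
  -- existence of a maximizer via compactness
  obtain ⟨ystar, hystar, hkpos⟩ := hsomepos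
  have hnear : ∀ᶠ y in nhdsWithin y₀ (Ioi y₀), k y < k ystar :=
    hlim0.eventually (eventually_lt_atBot (k ystar))
  obtain ⟨a, haI, hasub⟩ := mem_nhdsGT_iff_exists_Ioo_subset.mp hnear
  have ha : y₀ < a := haI
  have hfar : ∀ᶠ y in atTop, k y < k ystar := hliminfty.eventually_lt_const hkpos
  obtain ⟨b, hb⟩ := eventually_atTop.mp hfar
  have hmin : y₀ < min a ystar := lt_min ha hystar
  set lo := (y₀ + min a ystar) / 2 with hlodef
  have hlo1 : y₀ < lo := by rw [hlodef]; linarith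
  have hlo2 : lo < min a ystar := by rw [hlodef]; linarith
  set hi := max b ystar with hhidef
  have hyshi : ystar ≤ hi := le_max_right _ _
  have hyslo : lo ≤ ystar := le_of_lt (lt_of_lt_of_le hlo2 (min_le_right _ _))
  have hsub : Icc lo hi ⊆ Ioi y₀ := fun y hy => lt_of_lt_of_le hlo1 hy.1
  obtain ⟨yh, hyhmem, hyhmax⟩ := (isCompact_Icc (a := lo) (b := hi)).exists_isMaxOn
    (nonempty_Icc.mpr (hyslo.trans hyshi)) (hcont.mono hsub)
  have hys_mem : ystar ∈ Icc lo hi := ⟨hyslo, hyshi⟩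
  have hyh_ge : k ystar ≤ k yh := hyhmax hys_mem
  have hmaxyh : IsMaxOn k (Ioi y₀) yh := by
    intro y hy
    rcases le_or_gt y hi with h1 | h1
    · rcases le_or_gt lo y with h2 | h2
      · exact hyhmax ⟨h2, h1⟩
      · have hylt : y < a := lt_of_lt_of_le (h2.trans hlo2) (min_le_left _ _)
        exact le_of_lt (lt_of_lt_of_le (hasub ⟨hy, hylt⟩) hyh_ge)
    · exact le_of_lt (lt_of_lt_of_le (hb y (le_of_lt (lt_of_le_of_lt (le_max_left _ _) h1))) hyh_ge)
  have hyhgt : y₀ < yh := hsub hyhmem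
  have hkh : 0 < k yh := lt_of_lt_of_le hkpos hyh_ge
  -- any maximizer with positive value is > y₀ + K
  have hnum : ∀ m, y₀ < m → 0 < k m → y₀ + K < m := by
    intro m hm hkm
    have hpos := hξpos m hm
    rcases (div_pos_iff).mp hkm with ⟨h1, _⟩ | ⟨_, h2⟩
    · linarith
    · linarith
  -- the key lemma: a maximizer m with y₂ ≤ m satisfies everything
  have key : ∀ m, y₀ < m → y₂ ≤ m → IsMaxOn k (Ioi y₀) m →
      m ∈ Ioi y₀ ∧ IsMaxOn k (Ioi y₀) m ∧ max (y₀ + K) y₂ ≤ m ∧ StrictAntiOn k (Ioi m) := by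
    intro m hm hm2 hmax
    have hkm : 0 < k m := lt_of_lt_of_le hkpos (hmax hystar)
    have hmK : y₀ + K < m := hnum m hm hkm
    have hloc : IsLocalMax k m := hmax.isLocalMax (Ioi_mem_nhds hm)
    have hder0 : G m / (ξ m) ^ 2 = 0 := hloc.hasDerivAt_eq_zero (hdk m hm)
    have hGm : G m = 0 := by
      have h2 : (ξ m) ^ 2 ≠ 0 := pow_ne_zero _ (hξne m hm)
      exact (div_eq_zero_iff.mp hder0).resolve_right h2
    have hGanti : StrictAntiOn G (Ici m) := by
      apply strictAntiOn_of_deriv_neg (convex_Ici m)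
      · intro y hy
        exact ((hdG y (le_trans hm.le hy)).continuousAt).continuousWithinAt
      · intro y hy
        rw [interior_Ici] at hy
        have hy' : m < y := hy
        have hdy := hdG y (le_of_lt (hm.trans hy'))
        rw [hdy.deriv]
        have h1 : 0 < y - y₀ - K := by linarith
        have h2 : 0 < ξ'' y := hconv y (lt_of_le_of_lt hm2 hy')
        nlinarith
    have hGneg : ∀ y, m < y → G y < 0 := by
      intro y hy
      have := hGanti self_mem_Ici (le_of_lt hy) hy
      rwa [hGm] at this
    have hkanti : StrictAntiOn k (Ici m) := by
      apply strictAntiOn_of_deriv_neg (convex_Ici m)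
      · exact hcont.mono (fun y hy => lt_of_lt_of_le hm hy)
      · intro y hy
        rw [interior_Ici] at hy
        have hdy := hdk y (hm.trans hy)
        rw [hdy.deriv]
        exact div_neg_of_neg_of_pos (hGneg y hy) (pow_pos (hξpos y (hm.trans hy)) 2)
    exact ⟨hm, hmax, max_le (le_of_lt hmK) hm2, hkanti.mono Ioi_subset_Ici_self⟩
  -- produce a maximizer m with y₂ ≤ m
  obtain ⟨m, hm, hm2, hmax⟩ : ∃ m, y₀ < m ∧ y₂ ≤ m ∧ IsMaxOn k (Ioi y₀) m := by
    rcases le_or_gt y₂ yh with h | h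
    · exact ⟨yh, hyhgt, h, hmaxyh⟩
    · -- yh < y₂ : show y₂ is also a maximizer
      have hyhK : y₀ + K < yh := hnum yh hyhgt hkh
      have hloc : IsLocalMax k yh := hmaxyh.isLocalMax (Ioi_mem_nhds hyhgt)
      have hder0 : G yh / (ξ yh) ^ 2 = 0 := hloc.hasDerivAt_eq_zero (hdk yh hyhgt)
      have hGyh : G yh = 0 :=
        (div_eq_zero_iff.mp hder0).resolve_right (pow_ne_zero _ (hξne yh hyhgt))
      -- G is monotone on [yh, y₂]
      have hGmono : MonotoneOn G (Icc yh y₂) := by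
        apply monotoneOn_of_deriv_nonneg (convex_Icc yh y₂)
        · intro y hy
          exact ((hdG y (le_trans hyhgt.le hy.1)).continuousAt).continuousWithinAt
        · intro y hy
          rw [interior_Icc] at hy
          exact ((hdG y (le_of_lt (hyhgt.trans hy.1))).differentiableAt).differentiableWithinAt
        · intro y hy
          rw [interior_Icc] at hy
          have hdy := hdG y (le_of_lt (hyhgt.trans hy.1))
          rw [hdy.deriv]
          have h1 : 0 < y - y₀ - K := by linarith [hy.1]
          have h2 : ξ'' y ≤ 0 := hconc y ⟨le_of_lt (hyhgt.trans hy.1), le_of_lt hy.2⟩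
          nlinarith
      have hGnn : ∀ y ∈ Icc yh y₂, 0 ≤ G y := by
        intro y hy
        have := hGmono (left_mem_Icc.mpr (le_of_lt h)) hy hy.1
        rwa [hGyh] at this
      -- k is monotone on [yh, y₂]
      have hkmono : MonotoneOn k (Icc yh y₂) := by
        apply monotoneOn_of_deriv_nonneg (convex_Icc yh y₂)
        · exact hcont.mono (fun y hy => lt_of_lt_of_le hyhgt hy.1)
        · intro y hy
          rw [interior_Icc] at hy
          exact ((hdk y (hyhgt.trans hy.1)).differentiableAt).differentiableWithinAt
        · intro y hy
          rw [interior_Icc] at hy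
          have hdy := hdk y (hyhgt.trans hy.1)
          rw [hdy.deriv]
          exact div_nonneg (hGnn y ⟨le_of_lt hy.1, le_of_lt hy.2⟩)
            (le_of_lt (pow_pos (hξpos y (hyhgt.trans hy.1)) 2))
      have hky2 : k yh ≤ k y₂ :=
        hkmono (left_mem_Icc.mpr (le_of_lt h)) (right_mem_Icc.mpr (le_of_lt h)) (le_of_lt h)
      refine ⟨y₂, hyhgt.trans h, le_rfl, ?_⟩
      intro y hy
      exact le_trans (hmaxyh hy) hky2
  obtain ⟨hmem, hmaxon, hmaxle, hanti⟩ := key m hm hm2 hmax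
  refine ⟨m, ⟨hmem, hmaxon, hmaxle, hanti⟩, ?_⟩
  rintro c ⟨hc1, hc2', hc3, hc4⟩
  by_contra hne
  rcases lt_or_gt_of_ne hne with hlt | hgt
  · -- c < m
    have hmid1 : c < (c + m) / 2 := by linarith
    have hmid2 : (c + m) / 2 < m := by linarith
    have h1 : k m < k ((c + m) / 2) := hc4 hmid1 (hmid1.trans hmid2) hmid2
    have h2 : k ((c + m) / 2) ≤ k m :=
      hmaxon (show (c + m) / 2 ∈ Ioi y₀ from lt_trans hc1 hmid1)
    linarith
  · -- m < c
    have hmid1 : m < (m + c) / 2 := by linarith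
    have hmid2 : (m + c) / 2 < c := by linarith
    have h1 : k c < k ((m + c) / 2) := hanti hmid1 (hmid1.trans hmid2) hmid2
    have h2 : k ((m + c) / 2) ≤ k c :=
      hc2' (show (m + c) / 2 ∈ Ioi y₀ from lt_trans hmem hmid1)
    linarith
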